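/- Let p be a prime and let L, M, N be finite abelian groups whose orders are powers of p. Then the number of subgroups K of L such that K is isomorphic to M and L/K is isomorphic to N equals the number of subgroups K of L such that K is isomorphic to N and L/K is isomorphic to M. -/

import Mathlib

namespace Stmt6Aux

variable (G : Type*) [CommGroup G] [Finite G]

instance : HasEnoughRootsOfUnity ℂ (Monoid.exponent G) := by
  have : NeZero ((Monoid.exponent G : ℂ)) :=
    ⟨by exact_mod_cast Monoid.exponent_ne_zero_of_finite⟩
  infer_instance

/-- the dual group -/
abbrev Dual := G →* ℂˣ

noncomputable def dualIso : Dual G ≃* G :=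
  (CommGroup.monoidHom_mulEquiv_of_hasEnoughRootsOfUnity G ℂ).some

instance : Finite (Dual G) := Finite.of_equiv G (dualIso G).symm.toEquiv

lemma card_dual : Nat.card (Dual G) = Nat.card G := Nat.card_congr (dualIso G).toEquiv

variable {G}

/-- restriction map -/
def resHom (K : Subgroup G) : Dual G →* Dual K where
  toFun χ := χ.comp K.subtype
  map_one' := rfl
  map_mul' _ _ := rfl

/-- annihilator -/
def perp (K : Subgroup G) : Subgroup (Dual G) := (resHom K).ker

lemma mem_perp {K : Subgroup G} {χ : Dual G} : χ ∈ perp K ↔ ∀ x ∈ K, χ x = 1 := by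
  constructor
  · intro h x hx
    simpa [resHom] using DFunLike.congr_fun h (⟨x, hx⟩ : K)
  · intro h
    ext x
    simpa [resHom] using h x x.2


/-- lift along quotient map -/
def liftHom (K : Subgroup G) : Dual (G ⧸ K) →* Dual G where
  toFun χ := χ.comp (QuotientGroup.mk' K)
  map_one' := rfl
  map_mul' _ _ := rfl

lemma liftHom_injective (K : Subgroup G) : Function.Injective (liftHom K) := fun χ ψ h =>
  (MonoidHom.cancel_right (QuotientGroup.mk'_surjective K)).1 h

lemma liftHom_range (K : Subgroup G) : (liftHom K).range = perp K := by
  ext χ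
  rw [mem_perp]
  constructor
  · rintro ⟨φ, rfl⟩ x hx
    show φ ((QuotientGroup.mk' K) x) = 1
    have h1 : (QuotientGroup.mk' K) x = 1 := (QuotientGroup.eq_one_iff x).2 hx
    rw [h1, map_one]
  · intro h
    exact ⟨QuotientGroup.lift K χ h, rfl⟩

/-- perp K is isomorphic to the dual of the quotient -/
noncomputable def perpEquiv (K : Subgroup G) : perp K ≃* Dual (G ⧸ K) :=
  ((MulEquiv.subgroupCongr (liftHom_range K)).symm.trans
    (MonoidHom.ofInjective (liftHom_injective K)).symm)


lemma card_perp (K : Subgroup G) : Nat.card (perp K) = Nat.card (G ⧸ K) :=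
  (Nat.card_congr (perpEquiv K).toEquiv).trans (card_dual (G ⧸ K))

lemma range_resHom (K : Subgroup G) : (resHom K).range = ⊤ := by
  apply Subgroup.eq_top_of_card_eq
  have h1 : Nat.card (Dual G) = Nat.card (Dual G ⧸ perp K) * Nat.card (perp K) :=
    Subgroup.card_eq_card_quotient_mul_card_subgroup _
  have h2 : Nat.card (Dual G ⧸ perp K) = Nat.card (resHom K).range :=
    Nat.card_congr (QuotientGroup.quotientKerEquivRange (resHom K)).toEquiv
  have h3 : Nat.card G = Nat.card (G ⧸ K) * Nat.card K :=
    Subgroup.card_eq_card_quotient_mul_card_subgroup _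
  have h4 : (0:ℕ) < Nat.card (G ⧸ K) := Nat.card_pos
  rw [card_dual]
  rw [card_dual, h2, card_perp, mul_comm] at h1
  rw [h1] at h3
  exact Nat.eq_of_mul_eq_mul_left h4 h3

/-- the quotient by the annihilator is the dual of the subgroup -/
noncomputable def quotPerpEquiv (K : Subgroup G) : (Dual G ⧸ perp K) ≃* Dual K :=
  (QuotientGroup.quotientKerEquivRange (resHom K)).trans
    ((MulEquiv.subgroupCongr (range_resHom K)).trans Subgroup.topEquiv)

lemma mem_iff_forall_perp (K : Subgroup G) (a : G) :
    a ∈ K ↔ ∀ χ ∈ perp K, χ a = 1 := by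
  constructor
  · intro ha χ hχ
    exact mem_perp.1 hχ a ha
  · intro h
    by_contra hna
    have hne : (QuotientGroup.mk' K) a ≠ 1 := fun he => hna ((QuotientGroup.eq_one_iff a).1 he)
    obtain ⟨φ, hφ⟩ :=
      CommGroup.exists_apply_ne_one_of_hasEnoughRootsOfUnity (G ⧸ K) ℂ hne
    have hmem : liftHom K φ ∈ perp K := (liftHom_range K) ▸ ⟨φ, rfl⟩
    exact hφ (h _ hmem)

lemma perp_injective : Function.Injective (perp : Subgroup G → Subgroup (Dual G)) := by
  intro K₁ K₂ h
  ext a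
  rw [mem_iff_forall_perp, mem_iff_forall_perp, h]


lemma card_le (L M N : Type*) [CommGroup L] [CommGroup M] [CommGroup N]
    [Finite L] [Finite M] [Finite N] :
    Nat.card {K : Subgroup L // Nonempty (K ≃* M) ∧ Nonempty ((L ⧸ K) ≃* N)} ≤
    Nat.card {K : Subgroup L // Nonempty (K ≃* N) ∧ Nonempty ((L ⧸ K) ≃* M)} := by
  classical
  let f : Dual L ≃* L := dualIso L
  let Φ : Subgroup L → Subgroup L := fun K => (perp K).map f.toMonoidHom
  have hΦinj : Function.Injective Φ := fun K₁ K₂ h =>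
    perp_injective (Subgroup.map_injective (MulEquiv.injective f) h)
  have hinj : Function.Injective (f.toMonoidHom : Dual L →* L) := fun a b h => f.injective h
  have key : ∀ K : Subgroup L, Nonempty (K ≃* M) → Nonempty ((L ⧸ K) ≃* N) →
      Nonempty (Φ K ≃* N) ∧ Nonempty ((L ⧸ Φ K) ≃* M) := by
    intro K ⟨e1⟩ ⟨e2⟩
    constructor
    · exact ⟨(((Subgroup.equivMapOfInjective (perp K) f.toMonoidHom
        hinj).symm.trans (perpEquiv K)).trans
        (MulEquiv.monoidHomCongrLeft e2)).trans (dualIso N)⟩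
    · exact ⟨(((@QuotientGroup.congr _ _ _ _ (perp K) (Φ K) ⟨fun n hn g => by rw [mul_comm g n]; convert hn using 1; exact mul_inv_cancel_right n g⟩ ⟨fun n hn g => by rw [mul_comm g n]; convert hn using 1; exact mul_inv_cancel_right n g⟩ f rfl).symm.trans
        (quotPerpEquiv K)).trans
        (MulEquiv.monoidHomCongrLeft e1)).trans (dualIso M)⟩
  refine Nat.card_le_card_of_injective
    (fun K => ⟨Φ K.1, key K.1 K.2.1 K.2.2⟩) ?_
  intro K₁ K₂ h
  exact Subtype.ext (hΦinj (congrArg Subtype.val h))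

end Stmt6Aux

theorem stmt6 (p : ℕ) (hp : p.Prime) (L M N : Type*)
    [CommGroup L] [CommGroup M] [CommGroup N] [Finite L] [Finite M] [Finite N]
    (hL : IsPGroup p L) (hM : IsPGroup p M) (hN : IsPGroup p N) :
    Nat.card {K : Subgroup L // Nonempty (K ≃* M) ∧ Nonempty ((L ⧸ K) ≃* N)} =
    Nat.card {K : Subgroup L // Nonempty (K ≃* N) ∧ Nonempty ((L ⧸ K) ≃* M)} :=
  le_antisymm (Stmt6Aux.card_le L M N) (Stmt6Aux.card_le L N M)
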